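/- arXiv:1309.7537 — 5 statements merged into one kernel-verified Lean document; each statement's English description precedes it below -/
import Mathlib

section
/- There are no positive integers $a_1, a_2, b$ such that $a_1 a_2 (a_1 + a_2) = b^3$. -/
theorem stmt_0 : ¬ ∃ (a₁ a₂ b : ℕ), 0 < a₁ ∧ 0 < a₂ ∧ 0 < b ∧
    a₁ * a₂ * (a₁ + a₂) = b ^ 3 := by
  rintro ⟨a₁, a₂, b, h1, h2, hb, h⟩
  set g := Nat.gcd a₁ a₂ with hg
  have hg0 : 0 < g := Nat.gcd_pos_of_pos_left _ h1
  set u := a₁ / g with hu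
  set v := a₂ / g with hv
  have ha1 : a₁ = g * u := (Nat.mul_div_cancel' (Nat.gcd_dvd_left a₁ a₂)).symm
  have ha2 : a₂ = g * v := (Nat.mul_div_cancel' (Nat.gcd_dvd_right a₁ a₂)).symm
  have huv : Nat.Coprime u v := Nat.coprime_div_gcd_div_gcd hg0
  have hprod : g ^ 3 * (u * v * (u + v)) = b ^ 3 := by rw [← h, ha1, ha2]; ring
  have hgb : g ∣ b := (Nat.pow_dvd_pow_iff (by norm_num)).mp ⟨_, hprod.symm⟩
  obtain ⟨c, hc⟩ := hgb
  have hc3 : u * v * (u + v) = c ^ 3 := by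
    have : g ^ 3 * (u * v * (u + v)) = g ^ 3 * c ^ 3 := by rw [hprod, hc]; ring
    exact Nat.eq_of_mul_eq_mul_left (pow_pos hg0 3) this
  have hu0 : 0 < u := by
    rcases Nat.eq_zero_or_pos u with h0 | h0
    · rw [h0, mul_zero] at ha1; omega
    · exact h0
  have hv0 : 0 < v := by
    rcases Nat.eq_zero_or_pos v with h0 | h0
    · rw [h0, mul_zero] at ha2; omega
    · exact h0
  have hc0 : 0 < c := by
    rcases Nat.eq_zero_or_pos c with h0 | h0
    · rw [h0] at hc3; simp at hc3; omega
    · exact h0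
  -- coprimality
  have h1uv : Nat.Coprime u (u + v) := by
    simpa [Nat.coprime_add_self_left] using huv
  have h2uv : Nat.Coprime v (u + v) := by
    simpa [Nat.coprime_add_self_right] using huv.symm
  have hcop : Nat.Coprime (u * v) (u + v) := Nat.Coprime.mul h1uv h2uv
  have isUnit_of_cop : ∀ {x y : ℕ}, Nat.Coprime x y → IsUnit (gcd x y) := by
    intro x y hxy
    rw [Nat.isUnit_iff]
    exact hxy
  obtain ⟨r, hr⟩ : ∃ r, u + v = r ^ 3 := by
    exact exists_eq_pow_of_mul_eq_pow (isUnit_of_cop hcop.symm)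
      (show (u + v) * (u * v) = c ^ 3 by rw [mul_comm]; exact hc3)
  obtain ⟨d, hd⟩ : ∃ d, u * v = d ^ 3 :=
    exists_eq_pow_of_mul_eq_pow (isUnit_of_cop hcop) hc3
  obtain ⟨p, hp⟩ : ∃ p, u = p ^ 3 :=
    exists_eq_pow_of_mul_eq_pow (isUnit_of_cop huv) hd
  obtain ⟨q, hq⟩ : ∃ q, v = q ^ 3 := by
    exact exists_eq_pow_of_mul_eq_pow (isUnit_of_cop huv.symm)
      (show v * u = d ^ 3 by rw [mul_comm]; exact hd)
  have hp0 : p ≠ 0 := by rintro rfl; simp at hp; omega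
  have hq0 : q ≠ 0 := by rintro rfl; simp at hq; omega
  have hr0 : r ≠ 0 := by rintro rfl; simp at hr; omega
  exact fermatLastTheoremThree p q r hp0 hq0 hr0 (by rw [← hp, ← hq, ← hr])
end

section
/- There are no positive rational numbers $b_1, b_2$ such that $b_1 b_2 (b_1 + b_2) = 1$. -/
private lemma aux_no_cube : ∀ (a b n : ℤ), 0 < a → 0 < b → 0 < n →
    a * b * (a + b) = n ^ 3 → False := by
  intro a b n ha hb hn h
  have hgnat : 0 < Int.gcd a b := Int.gcd_pos_of_ne_zero_left b (show a ≠ 0 by positivity)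
  set g : ℤ := (Int.gcd a b : ℤ) with hg
  have hg0 : (0:ℤ) < g := Int.natCast_pos.mpr hgnat
  obtain ⟨u, hu⟩ : g ∣ a := Int.gcd_dvd_left a b
  obtain ⟨v, hv⟩ : g ∣ b := Int.gcd_dvd_right a b
  have hgne : g ≠ 0 := ne_of_gt hg0
  have hu0 : 0 < u := by nlinarith
  have hv0 : 0 < v := by nlinarith
  have huv : IsCoprime u v := by
    rw [Int.isCoprime_iff_gcd_eq_one]
    have := Int.gcd_div_gcd_div_gcd (i := a) (j := b) hgnat
    have e1 : a / g = u := by rw [hu]; exact Int.mul_ediv_cancel_left u hgne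
    have e2 : b / g = v := by rw [hv]; exact Int.mul_ediv_cancel_left v hgne
    rwa [e1, e2] at this
  have hdvd : g ∣ n := by
    rw [← Int.pow_dvd_pow_iff (n := 3) (by norm_num)]
    exact ⟨u * v * (u + v), by rw [← h, hu, hv]; ring⟩
  obtain ⟨m, hm⟩ := hdvd
  have hm0 : 0 < m := by nlinarith
  rw [hu, hv, hm] at h
  have key : (u * v) * (u + v) = m ^ 3 := by
    have h2 : g ^ 3 * ((u * v) * (u + v)) = g ^ 3 * m ^ 3 := by linear_combination h
    exact mul_left_cancel₀ (pow_ne_zero 3 hgne) h2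
  have cop1 : IsCoprime u (u + v) := by
    have := huv.add_mul_left_right 1
    rwa [mul_one, add_comm] at this
  have cop2 : IsCoprime v (u + v) := by
    have := huv.symm.add_mul_left_right 1
    rwa [mul_one] at this
  have copm : IsCoprime (u * v) (u + v) := cop1.mul_left cop2
  obtain ⟨z, hz⟩ := Int.eq_pow_of_mul_eq_pow_odd_right copm (by decide) key
  obtain ⟨w, hw⟩ := Int.eq_pow_of_mul_eq_pow_odd_left copm (by decide) key
  obtain ⟨x, hx⟩ := Int.eq_pow_of_mul_eq_pow_odd_left huv (by decide) hw
  obtain ⟨y, hy⟩ := Int.eq_pow_of_mul_eq_pow_odd_right huv (by decide) hw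
  have hx0 : x ≠ 0 := by intro hc; rw [hc] at hx; simp at hx; omega
  have hy0 : y ≠ 0 := by intro hc; rw [hc] at hy; simp at hy; omega
  have hz0 : z ≠ 0 := by intro hc; rw [hc] at hz; simp at hz; omega
  exact (fermatLastTheoremFor_iff_int.mp fermatLastTheoremThree) x y z hx0 hy0 hz0
    (by rw [← hx, ← hy, ← hz])

theorem stmt_1 : ¬ ∃ (b₁ b₂ : ℚ), 0 < b₁ ∧ 0 < b₂ ∧
    b₁ * b₂ * (b₁ + b₂) = 1 := by
  rintro ⟨b₁, b₂, h1, h2, h⟩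
  have e1 : (b₁ : ℚ) = (b₁.num : ℚ) / (b₁.den : ℚ) := (Rat.num_div_den b₁).symm
  have e2 : (b₂ : ℚ) = (b₂.num : ℚ) / (b₂.den : ℚ) := (Rat.num_div_den b₂).symm
  have d1 : ((b₁.den : ℚ)) ≠ 0 := by exact_mod_cast b₁.den_nz
  have d2 : ((b₂.den : ℚ)) ≠ 0 := by exact_mod_cast b₂.den_nz
  rw [e1, e2] at h
  field_simp at h
  have hint : b₁.num * b₂.num * (b₁.num * (b₂.den : ℤ) + b₂.num * (b₁.den : ℤ))
      = (b₁.den : ℤ) * (b₂.den : ℤ) * ((b₁.den : ℤ) * (b₂.den : ℤ)) := by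
    have hq : ((b₁.num * b₂.num * (b₁.num * (b₂.den : ℤ) + b₂.num * (b₁.den : ℤ)) : ℤ) : ℚ)
        = (((b₁.den : ℤ) * (b₂.den : ℤ) * ((b₁.den : ℤ) * (b₂.den : ℤ)) : ℤ) : ℚ) := by
      push_cast; linear_combination h
    exact_mod_cast hq
  have hZ : (b₁.num * (b₂.den : ℤ)) * (b₂.num * (b₁.den : ℤ)) *
      ((b₁.num * (b₂.den : ℤ)) + (b₂.num * (b₁.den : ℤ)))
      = ((b₁.den : ℤ) * (b₂.den : ℤ)) ^ 3 := by
    linear_combination ((b₁.den : ℤ) * (b₂.den : ℤ)) * hint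
  have hn1 : 0 < b₁.num := Rat.num_pos.mpr h1
  have hn2 : 0 < b₂.num := Rat.num_pos.mpr h2
  have hd1 : (0:ℤ) < b₁.den := by exact_mod_cast b₁.pos
  have hd2 : (0:ℤ) < b₂.den := by exact_mod_cast b₂.pos
  exact aux_no_cube _ _ _ (by positivity) (by positivity) (by positivity) hZ
end

section
/- The equation $u^2 + u = v^3$ has no solution in positive rational numbers $u, v$. -/
theorem stmt_4 : ¬ ∃ (u v : ℚ), 0 < u ∧ 0 < v ∧ u ^ 2 + u = v ^ 3 := by
  rintro ⟨u, v, hu, hv, heq⟩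
  set A : ℤ := u.num with hAdef
  set B : ℤ := (u.den : ℤ) with hBdef
  set C : ℤ := v.num with hCdef
  set D : ℤ := (v.den : ℤ) with hDdef
  have hA : 0 < A := Rat.num_pos.mpr hu
  have hB : 0 < B := Int.natCast_pos.mpr u.pos
  have hC : 0 < C := Rat.num_pos.mpr hv
  have hD : 0 < D := Int.natCast_pos.mpr v.pos
  have hAB : IsCoprime A B := by
    rw [Int.isCoprime_iff_gcd_eq_one]
    exact u.reduced
  have hCD : IsCoprime C D := by
    rw [Int.isCoprime_iff_gcd_eq_one]
    exact v.reduced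
  -- main integer equation
  have hBQ : ((B : ℚ)) ≠ 0 := by exact_mod_cast hB.ne'
  have hDQ : ((D : ℚ)) ≠ 0 := by exact_mod_cast hD.ne'
  have hu' : (u : ℚ) = (A : ℚ) / B := (Rat.num_div_den u).symm
  have hv' : (v : ℚ) = (C : ℚ) / D := (Rat.num_div_den v).symm
  have key : (A * (A + B)) * D ^ 3 = C ^ 3 * B ^ 2 := by
    have hq := heq
    rw [hu', hv'] at hq
    field_simp at hq
    have hz : (A ^ 2 * B + A * B ^ 2) * D ^ 3 = C ^ 3 * (B ^ 2 * B) := by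
      have h' : A * (A + B) * D ^ 3 = B ^ 2 * C ^ 3 := by exact_mod_cast hq
      linear_combination B * h'
    have : B * ((A * (A + B)) * D ^ 3) = B * (C ^ 3 * B ^ 2) := by linear_combination hz
    exact mul_left_cancel₀ hB.ne' this
  -- coprimality of A(A+B) with B
  have hABB : IsCoprime (A + B) B := by
    obtain ⟨x, y, hxy⟩ := hAB
    exact ⟨x, y - x, by ring_nf; linarith [hxy]⟩
  have hcopAA : IsCoprime (A * (A + B)) (B ^ 2) :=
    (hAB.mul_left hABB).pow_right
  -- B^2 ∣ D^3
  have h1 : B ^ 2 ∣ D ^ 3 := by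
    have hd : B ^ 2 ∣ C ^ 3 * B ^ 2 := dvd_mul_left _ _
    rw [← key] at hd
    exact (hcopAA.symm).dvd_of_dvd_mul_left hd
  -- D^3 ∣ B^2
  have h2 : D ^ 3 ∣ B ^ 2 := by
    have hd : D ^ 3 ∣ (A * (A + B)) * D ^ 3 := dvd_mul_left _ _
    rw [key] at hd
    exact ((hCD.symm.pow : IsCoprime (D ^ 3) (C ^ 3))).dvd_of_dvd_mul_left hd
  have hBD : B ^ 2 = D ^ 3 :=
    Int.dvd_antisymm (by positivity) (by positivity) h1 h2
  -- cancel to get A(A+B) = C^3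
  have hmain : A * (A + B) = C ^ 3 := by
    have hD3 : D ^ 3 ≠ 0 := by positivity
    have : (A * (A + B)) * D ^ 3 = C ^ 3 * D ^ 3 := by rw [key, hBD]
    exact mul_right_cancel₀ hD3 this
  -- A and A+B are cubes
  have hAAB : IsCoprime A (A + B) := by
    obtain ⟨x, y, hxy⟩ := hAB
    exact ⟨x - y, y, by ring_nf; linarith [hxy]⟩
  obtain ⟨⟨s, hs⟩, ⟨t, ht⟩⟩ :=
    Int.eq_pow_of_mul_eq_pow_odd hAAB (by decide : Odd 3) hmain
  -- B is a cube
  have hBcube : ∃ m : ℤ, B = m ^ 3 := by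
    have hq : ((B : ℚ)) ^ 2 = ((D : ℚ)) ^ 3 := by exact_mod_cast hBD
    obtain ⟨c, hc3, _⟩ := (pow_eq_pow_iff_of_coprime (by decide : Nat.Coprime 2 3)).mp hq
    have hden : c.den = 1 := by
      have : (c ^ 3).den = 1 := by rw [← hc3]; simp [hBdef]
      rw [Rat.den_pow] at this
      exact (pow_eq_one_iff.mp this).resolve_right (by norm_num)
    refine ⟨c.num, ?_⟩
    have : ((B : ℚ)) = ((c.num : ℚ)) ^ 3 := by
      rw [hc3]; congr 1
      exact (Rat.den_eq_one_iff c).mp hden |>.symm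
    exact_mod_cast this
  obtain ⟨m, hm⟩ := hBcube
  -- FLT contradiction
  have flt : FermatLastTheoremWith ℤ 3 :=
    fermatLastTheoremFor_iff_int.mp fermatLastTheoremThree
  have hs0 : s ≠ 0 := by rintro rfl; rw [zero_pow (by norm_num)] at hs; omega
  have hm0 : m ≠ 0 := by rintro rfl; rw [zero_pow (by norm_num)] at hm; omega
  have ht0 : t ≠ 0 := by rintro rfl; rw [zero_pow (by norm_num)] at ht; omega
  exact flt s m t hs0 hm0 ht0 (by rw [← hs, ← hm, ← ht])
end

section
/- For every integer $s \geq 5$, there exist infinitely many $(s-1)$-tuples of positive integers $(a_1, \ldots, a_{s-1})$ such that $a_1 a_2 \cdots a_{s-1}(a_1 + a_2 + \cdots + a_{s-1})$ is a perfect $s$-th power. -/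
/-- Sum of `2^e` over `range' a n` (step 1). -/
lemma sum_map_pow_range' : ∀ (n a : ℕ),
    ((List.range' a n).map (fun e => 2 ^ e)).sum + 2 ^ a = 2 ^ (a + n) := by
  intro n
  induction n with
  | zero => intro a; simp
  | succ n ih =>
    intro a
    have h := ih (a + 1)
    have h2 : (2:ℕ) ^ (a + 1) = 2 * 2 ^ a := by rw [pow_succ]; ring
    have h3 : a + (n + 1) = (a + 1) + n := by omega
    rw [h3, List.range'_succ]
    simp only [List.map_cons, List.sum_cons]
    omega

/-- Gauss-type sum for `range'`. -/
lemma two_mul_sum_range' : ∀ (n a : ℕ),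
    2 * (List.range' a n).sum + n = n * (2 * a + n) := by
  intro n
  induction n with
  | zero => intro a; simp
  | succ n ih =>
    intro a
    have h := ih (a + 1)
    rw [List.range'_succ]
    simp only [List.sum_cons]
    zify at h ⊢
    linear_combination h

lemma prod_map_two_pow : ∀ (E : List ℕ),
    (E.map (fun e => 2 ^ e)).prod = 2 ^ E.sum := by
  intro E
  induction E with
  | nil => simp
  | cons e E ih =>
    simp only [List.map_cons, List.prod_cons, List.sum_cons, ih, pow_add]

lemma fin_prod_list (L : List ℕ) {n : ℕ} (h : n = L.length) :
    ∏ i : Fin n, L.get (Fin.cast h i) = L.prod := by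
  subst h
  rw [← Fin.prod_ofFn]
  congr 1
  exact (List.ofFn_get L)

lemma fin_sum_list (L : List ℕ) {n : ℕ} (h : n = L.length) :
    ∑ i : Fin n, L.get (Fin.cast h i) = L.sum := by
  subst h
  rw [← Fin.sum_ofFn]
  congr 1
  exact (List.ofFn_get L)

/-- Key existence lemma: a base tuple, as a list. -/
lemma exists_good (s : ℕ) (hs : 5 ≤ s) :
    ∃ (L : List ℕ) (B : ℕ), L.length = s - 1 ∧ (∀ x ∈ L, 0 < x) ∧
      L.prod * L.sum = B ^ s := by
  -- split into: s = 5, 7, 9 (hardcoded) and generic even / generic odd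
  rcases Nat.even_or_odd s with he | ho
  · -- even : s = 2p + 6
    obtain ⟨m, hm⟩ := he
    obtain ⟨p, rfl⟩ : ∃ p, m = p + 3 := ⟨m - 3, by omega⟩
    have hsval : s = 2 * p + 6 := by omega
    subst hsval
    refine ⟨([1,1] ++ List.range' 2 p ++ [p+2, p+2, p+2] ++ List.range' (p+4) p).map
      (fun e => 2 ^ e), 2 ^ (p + 2), ?_, ?_, ?_⟩
    · simp only [List.length_map, List.length_append, List.length_range', List.length_cons,
        List.length_nil]
      omega
    · intro x hx
      simp only [List.mem_map] at hx
      obtain ⟨e, _, rfl⟩ := hx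
      positivity
    · -- compute product and sum
      rw [prod_map_two_pow]
      -- sum of entries
      have hB1 := sum_map_pow_range' p 2
      have hB2 := sum_map_pow_range' p (p + 4)
      have hx2 : (2:ℕ) ^ (p + 4) = 4 * 2 ^ (p + 2) := by
        rw [show p + 4 = (p + 2) + 2 by omega, pow_add]; ring
      have hx3 : (2:ℕ) ^ (p + 4 + p) = 2 ^ (p + 2) * 2 ^ (p + 2) := by
        rw [show p + 4 + p = (p + 2) + (p + 2) by omega, pow_add]
      have hx1 : (2:ℕ) ^ (2 + p) = 2 ^ (p + 2) := by rw [Nat.add_comm]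
      have hsum : (([1,1] ++ List.range' 2 p ++ [p+2, p+2, p+2] ++ List.range' (p+4) p).map
          (fun e => 2 ^ e)).sum = 2 ^ (p + 2) * 2 ^ (p + 2) := by
        simp only [List.map_append, List.sum_append, List.map_cons, List.map_nil,
          List.sum_cons, List.sum_nil]
        omega
      rw [hsum]
      -- exponent bookkeeping
      have hR1 := two_mul_sum_range' p 2
      have hR2 := two_mul_sum_range' p (p + 4)
      have hG : ([1,1] ++ List.range' 2 p ++ [p+2, p+2, p+2] ++ List.range' (p+4) p).sum
          + (2 * p + 4) = (p + 2) * (2 * p + 6) := by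
        simp only [List.sum_append, List.sum_cons, List.sum_nil]
        have h1 : 2 * (List.range' 2 p).sum + p = p * (2 * 2 + p) := hR1
        have h2 : 2 * (List.range' (p+4) p).sum + p = p * (2 * (p + 4) + p) := hR2
        nlinarith [h1, h2]
      rw [← pow_add, ← pow_add, ← pow_mul]
      congr 1
      linarith [hG]
  · -- odd
    rcases ho with ⟨m, hm⟩
    by_cases h5 : s = 5
    · subst h5
      exact ⟨[1, 2, 12, 12], 6, by simp, by decide, by decide⟩
    by_cases h7 : s = 7
    · subst h7
      exact ⟨[2, 2, 2, 9, 9, 12], 6, by simp, by decide, by norm_num⟩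
    by_cases h9 : s = 9
    · subst h9
      exact ⟨[4, 4, 8, 16, 16, 16, 32, 32], 16, by simp, by decide, by norm_num⟩
    -- s = 2q + 11
    obtain ⟨q, rfl⟩ : ∃ q, s = 2 * q + 11 := ⟨m - 5, by omega⟩
    refine ⟨([2,2,3,4,4,4] ++ List.range' 6 (2*q+1) ++ [2*q+7, 2*q+7, 2*q+7]).map
      (fun e => 2 ^ e), 2 ^ (q + 5), ?_, ?_, ?_⟩
    · simp only [List.length_map, List.length_append, List.length_range', List.length_cons,
        List.length_nil]
      omega
    · intro x hx
      simp only [List.mem_map] at hx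
      obtain ⟨e, _, rfl⟩ := hx
      positivity
    · rw [prod_map_two_pow]
      have hB1 := sum_map_pow_range' (2*q+1) 6
      have hx1 : (2:ℕ) ^ (6 + (2*q+1)) = 2 ^ (2*q+7) := by
        rw [show 6 + (2*q+1) = 2*q+7 by omega]
      have hx2 : (2:ℕ) ^ (2*q+9) = 4 * 2 ^ (2*q+7) := by
        rw [show 2*q+9 = (2*q+7) + 2 by omega, pow_add]; ring
      have hsum : (([2,2,3,4,4,4] ++ List.range' 6 (2*q+1) ++ [2*q+7, 2*q+7, 2*q+7]).map
          (fun e => 2 ^ e)).sum = 2 ^ (2*q+9) := by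
        simp only [List.map_append, List.sum_append, List.map_cons, List.map_nil,
          List.sum_cons, List.sum_nil]
        omega
      rw [hsum]
      have hR := two_mul_sum_range' (2*q+1) 6
      have hG : ([2,2,3,4,4,4] ++ List.range' 6 (2*q+1) ++ [2*q+7, 2*q+7, 2*q+7]).sum
          + (2*q+9) = (q + 5) * (2 * q + 11) := by
        simp only [List.sum_append, List.sum_cons, List.sum_nil]
        nlinarith [hR]
      rw [← pow_add, hG, pow_mul]

theorem stmt_15 (s : ℕ) (hs : 5 ≤ s) :
    {a : Fin (s - 1) → ℕ | (∀ i, 0 < a i) ∧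
      ∃ b : ℕ, (∏ i, a i) * (∑ i, a i) = b ^ s}.Infinite := by
  obtain ⟨L, B, hlen, hpos, hLB⟩ := exists_good s hs
  have hcast : s - 1 = L.length := hlen.symm
  set base : Fin (s - 1) → ℕ := fun i => L.get (Fin.cast hcast i) with hbase
  have hprod : ∏ i, base i = L.prod := fin_prod_list L hcast
  have hsumL : ∑ i, base i = L.sum := fin_sum_list L hcast
  have hbpos : ∀ i, 0 < base i := fun i => hpos _ (L.get_mem _)
  have hne : 0 < s - 1 := by omega
  refine Set.infinite_of_injective_forall_mem
    (f := fun c : ℕ => fun i => (c + 1) * base i) ?_ ?_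
  · -- injective
    intro c c' hcc
    have := congrFun hcc ⟨0, hne⟩
    have hb := hbpos ⟨0, hne⟩
    simp only at this
    exact by
      have := Nat.eq_of_mul_eq_mul_right hb this
      omega
  · intro c
    constructor
    · intro i
      exact Nat.mul_pos (by omega) (hbpos i)
    · refine ⟨(c + 1) * B, ?_⟩
      have hP : (∏ i, (c + 1) * base i) = (c + 1) ^ (s - 1) * L.prod := by
        rw [Finset.prod_mul_distrib, Finset.prod_const, hprod]
        simp [Finset.card_univ]
      have hS : (∑ i, (c + 1) * base i) = (c + 1) * L.sum := by
        rw [← Finset.mul_sum, hsumL]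
      rw [hP, hS]
      calc (c + 1) ^ (s - 1) * L.prod * ((c + 1) * L.sum)
          = (c + 1) ^ ((s - 1) + 1) * (L.prod * L.sum) := by ring
        _ = (c + 1) ^ s * B ^ s := by rw [hLB, show (s - 1) + 1 = s by omega]
        _ = ((c + 1) * B) ^ s := (mul_pow _ _ _).symm
end

section
/- For any positive rationals $u, v, t_0$ with $4 u t_0^2 - u v^2 t_0 + 4 > 0$, the positive rationals $x = \frac{u v^3 t_0}{2(4ut_0^2 - uv^2 t_0 + 4)}$, $y = \frac{4ut_0^2 - uv^2 t_0 + 4}{2uvt_0(ut_0^2 + 1)}$, $z = \frac{(4ut_0^2 - uv^2 t_0 + 4)t_0}{2v(ut_0^2+1)}$ satisfy $xyzu(x + y + z + v) = 1$. -/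
theorem stmt_19 (u v t₀ : ℚ) (hu : 0 < u) (hv : 0 < v) (ht : 0 < t₀)
    (h : 0 < 4 * u * t₀ ^ 2 - u * v ^ 2 * t₀ + 4) :
    let x := u * v ^ 3 * t₀ / (2 * (4 * u * t₀ ^ 2 - u * v ^ 2 * t₀ + 4))
    let y := (4 * u * t₀ ^ 2 - u * v ^ 2 * t₀ + 4) / (2 * u * v * t₀ * (u * t₀ ^ 2 + 1))
    let z := (4 * u * t₀ ^ 2 - u * v ^ 2 * t₀ + 4) * t₀ / (2 * v * (u * t₀ ^ 2 + 1))
    0 < x ∧ 0 < y ∧ 0 < z ∧ x * y * z * u * (x + y + z + v) = 1 := by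
  intro x y z
  have hq : (0:ℚ) < u * t₀ ^ 2 + 1 := by positivity
  refine ⟨by positivity, by positivity, by positivity, ?_⟩
  show u * v ^ 3 * t₀ / (2 * (4 * u * t₀ ^ 2 - u * v ^ 2 * t₀ + 4)) *
      ((4 * u * t₀ ^ 2 - u * v ^ 2 * t₀ + 4) / (2 * u * v * t₀ * (u * t₀ ^ 2 + 1))) *
      ((4 * u * t₀ ^ 2 - u * v ^ 2 * t₀ + 4) * t₀ / (2 * v * (u * t₀ ^ 2 + 1))) * u *
      (u * v ^ 3 * t₀ / (2 * (4 * u * t₀ ^ 2 - u * v ^ 2 * t₀ + 4)) +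
       (4 * u * t₀ ^ 2 - u * v ^ 2 * t₀ + 4) / (2 * u * v * t₀ * (u * t₀ ^ 2 + 1)) +
       (4 * u * t₀ ^ 2 - u * v ^ 2 * t₀ + 4) * t₀ / (2 * v * (u * t₀ ^ 2 + 1)) + v) = 1
  rw [div_add_div _ _ (by positivity) (by positivity), div_add_div _ _ (by positivity) (by positivity), div_add' _ _ _ (by positivity), div_mul_div_comm, div_mul_div_comm, div_mul_eq_mul_div, div_mul_div_comm, div_eq_one_iff_eq (by positivity)]
  ring
end
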